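/- Let (R, m) be a local ring of prime characteristic p and let M be a simple R{F}-module on which F acts injectively. Equip N = M⟨x^{-1}⟩ = ⊕_{n≥1} M x^{-n} with its R[[x]]{F}-module structure where F(u x^{-n}) = F(u) x^{-pn}. Then N is a simple R[[x]]{F}-module. -/

import Mathlib

/-- Let `(R, m)` be a local ring of prime characteristic `p` and `M` a simple `R{F}`-module
on which `F` acts injectively.  Let `N = M⟨x⁻¹⟩ = ⊕_{n ≥ 1} M x⁻ⁿ` (realized as an
`R[[x]]`-module additively isomorphic to `ℕ →₀ M`, index `n` recording the coefficient of
`x^{-(n+1)}`, with `R` acting coordinatewise and `x` acting as the shift), equipped with the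
Frobenius action `G(u x⁻ⁿ) = F(u) x^{-pn}`.  Then `N` is a simple `R[[x]]{F}`-module. -/
theorem stmt14 (R : Type) [CommRing R] [IsLocalRing R] (p : ℕ) (hp : p.Prime) [CharP R p]
    (M : Type) [AddCommGroup M] [Module R M] [Nontrivial M] (F : M →+ M)
    (hF : ∀ (r : R) (u : M), F (r • u) = r ^ p • F u)
    (hFinj : Function.Injective F)
    (hsimple : ∀ V : Submodule R M, (∀ v ∈ V, F v ∈ V) → V = ⊥ ∨ V = ⊤)
    (N : Type) [AddCommGroup N] [Module (PowerSeries R) N]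
    (e : N ≃+ (ℕ →₀ M))
    (hC : ∀ (r : R) (w : N), e ((PowerSeries.C r) • w) = r • e w)
    (hX : ∀ (w : N) (n : ℕ), e ((PowerSeries.X : PowerSeries R) • w) n = e w (n + 1))
    (G : N →+ N)
    (hG : ∀ (s : PowerSeries R) (w : N), G (s • w) = s ^ p • G w)
    (hGF : ∀ (u : M) (n : ℕ),
        G (e.symm (Finsupp.single n u)) = e.symm (Finsupp.single (p * n + p - 1) (F u))) :
    ∀ V : Submodule (PowerSeries R) N, (∀ w ∈ V, G w ∈ V) → V = ⊥ ∨ V = ⊤ := by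
  intro V hV
  rcases eq_or_ne V ⊥ with h | hbot
  · exact Or.inl h
  right
  have hp2 : 2 ≤ p := hp.two_le
  -- action of X^k on coordinates
  have hXk : ∀ (k : ℕ) (w : N) (n : ℕ),
      e ((PowerSeries.X ^ k : PowerSeries R) • w) n = e w (n + k) := by
    intro k
    induction k with
    | zero => intro w n; simp
    | succ k ih =>
      intro w n
      rw [pow_succ, mul_smul, ih, hX]; congr 1
  -- shifting down with X powers
  have hshift : ∀ (n k : ℕ) (u : M), e.symm (Finsupp.single (n + k) u) ∈ V →
      e.symm (Finsupp.single n u) ∈ V := by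
    intro n k u hmem
    have key : (PowerSeries.X ^ k : PowerSeries R) • e.symm (Finsupp.single (n + k) u)
        = e.symm (Finsupp.single n u) := by
      apply e.injective
      rw [AddEquiv.apply_symm_apply]
      ext m
      rw [hXk, AddEquiv.apply_symm_apply]
      simp [Finsupp.single_apply, Nat.add_right_cancel_iff]
    rw [← key]
    exact V.smul_mem _ hmem
  -- applying G and shifting back
  have hGstep : ∀ (n : ℕ) (u : M), e.symm (Finsupp.single n u) ∈ V →
      e.symm (Finsupp.single n (F u)) ∈ V := by
    intro n u hmem
    have h1 : e.symm (Finsupp.single (p * n + p - 1) (F u)) ∈ V := by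
      rw [← hGF]; exact hV _ hmem
    have hle : n ≤ p * n := Nat.le_mul_of_pos_left n (by omega)
    have hk : n + (p * n + p - 1 - n) = p * n + p - 1 := by omega
    have := hshift n (p * n + p - 1 - n) (F u)
    rw [hk] at this
    exact this h1
  -- scalar action
  have hsmul : ∀ (r : R) (n : ℕ) (u : M),
      e.symm (Finsupp.single n u) ∈ V → e.symm (Finsupp.single n (r • u)) ∈ V := by
    intro r n u hmem
    have key : (PowerSeries.C r) • e.symm (Finsupp.single n u)
        = e.symm (Finsupp.single n (r • u)) := by
      apply e.injective
      rw [hC, AddEquiv.apply_symm_apply, AddEquiv.apply_symm_apply, Finsupp.smul_single]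
    rw [← key]
    exact V.smul_mem _ hmem
  -- the submodules of coefficients
  let W : ℕ → Submodule R M := fun n =>
    { carrier := {u | e.symm (Finsupp.single n u) ∈ V}
      add_mem' := fun {a b} ha hb => by
        have := V.add_mem ha hb
        rwa [← map_add, ← Finsupp.single_add] at this
      zero_mem' := by
        show e.symm (Finsupp.single n (0 : M)) ∈ V
        rw [Finsupp.single_zero, map_zero]
        exact V.zero_mem
      smul_mem' := fun r u hu => hsmul r n u hu }
  -- a nonzero element of V gives a nonzero coefficient in degree 0
  obtain ⟨w, hwV, hw0⟩ := Submodule.ne_bot_iff V |>.mp hbot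
  have hew : e w ≠ 0 := fun h => hw0 (by apply e.injective; simpa using h)
  have hsupp : (e w).support.Nonempty := Finsupp.support_nonempty_iff.mpr hew
  set n0 := (e w).support.max' hsupp with hn0
  have hcoef : e w n0 ≠ 0 := Finsupp.mem_support_iff.mp ((e w).support.max'_mem hsupp)
  have htop0 : e.symm (Finsupp.single 0 (e w n0)) ∈ V := by
    have key : (PowerSeries.X ^ n0 : PowerSeries R) • w
        = e.symm (Finsupp.single 0 (e w n0)) := by
      apply e.injective
      rw [AddEquiv.apply_symm_apply]
      ext m
      rw [hXk]
      rcases Nat.eq_zero_or_pos m with hm | hm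
      · subst hm; simp
      · have hz : e w (m + n0) = 0 := by
          by_contra h
          have hmem : m + n0 ∈ (e w).support := Finsupp.mem_support_iff.mpr h
          have := Finset.le_max' _ _ hmem
          omega
        rw [hz, Finsupp.single_apply, if_neg (by omega)]
    rw [← key]
    exact V.smul_mem _ hwV
  -- climbing: nonzero single elements in arbitrarily high degree
  have hclimb : ∀ k : ℕ, ∃ m, k ≤ m ∧ ∃ v : M, v ≠ 0 ∧ e.symm (Finsupp.single m v) ∈ V := by
    intro k
    induction k with
    | zero => exact ⟨0, le_refl _, e w n0, hcoef, htop0⟩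
    | succ k ih =>
      obtain ⟨m, hm, v, hv0, hvV⟩ := ih
      refine ⟨p * m + p - 1, ?_, F v, ?_, ?_⟩
      · have : m ≤ p * m := Nat.le_mul_of_pos_left m (by omega)
        omega
      · intro h
        exact hv0 (hFinj (by rw [h, map_zero]))
      · rw [← hGF]; exact hV _ hvV
  -- every W n is all of M
  have hWtop : ∀ n : ℕ, ∀ u : M, e.symm (Finsupp.single n u) ∈ V := by
    intro n
    have hstable : ∀ v ∈ W n, F v ∈ W n := fun v hv => hGstep n v hv
    rcases hsimple (W n) hstable with h | h
    · exfalso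
      obtain ⟨m, hm, v, hv0, hvV⟩ := hclimb n
      have : v ∈ W n := by
        have := hshift n (m - n) v
        rw [Nat.add_sub_cancel' hm] at this
        exact this hvV
      rw [h] at this
      exact hv0 this
    · intro u
      have : u ∈ W n := h ▸ Submodule.mem_top
      exact this
  -- conclude V = ⊤
  have hall : ∀ f : ℕ →₀ M, e.symm f ∈ V := by
    intro f
    induction f using Finsupp.induction with
    | zero => simp only [map_zero]; exact V.zero_mem
    | single_add n u f _ _ ih =>
      rw [map_add]
      exact V.add_mem (hWtop n u) ih
  rw [eq_top_iff]
  intro w _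
  have := hall (e w)
  rwa [AddEquiv.symm_apply_apply] at this
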